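/- Let K ∈ ℕ, n = 2^K, and let τ ≥ 600 be a real number. Let x ∈ ℕⁿ (indexed by {1,…,n}) be a vector of nonnegative integer frequencies and let D = |{a ∈ {1,…,n} : x_a > 0}|. Let h : {1,…,n} → {1,…,n} be a uniformly random function, and for each k ∈ {0,…,K} define f[k] = Σ_{a : lsb(h(a)) = k} x_a. Then with probability at least 2/3 over the choice of h, the following holds: for every function f̂ : {0,…,K} → ℝ satisfying |f̂[k] − f[k]| ≤ τ for all k ∈ {0,…,K}, if ℓ denotes the largest index in {0,…,K} with f̂[ℓ] > τ (and ℓ = 0 if no such index exists), then D/(12τ) ≤ 2^ℓ ≤ 4D + 1. -/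

import Mathlib

open Finset
open scoped Classical

lemma card_eval_mem {n : ℕ} (a : Fin n) (A : Finset (Fin n)) :
    (univ.filter fun h : Fin n → Fin n => h a ∈ A).card = A.card * n ^ (n - 1) := by
  have he : (univ.filter fun h : Fin n → Fin n => h a ∈ A)
      = Fintype.piFinset (fun i => if i = a then A else univ) := by
    ext h
    simp only [mem_filter, mem_univ, true_and, Fintype.mem_piFinset]
    constructor
    · intro hh i
      by_cases hi : i = a <;> simp [hi, hh]
    · intro hh
      have := hh a
      simpa using this
  rw [he, Fintype.card_piFinset]
  rw [← Finset.mul_prod_erase univ _ (mem_univ a)]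
  simp only [if_pos rfl]
  congr 1
  rw [Finset.prod_congr rfl (fun i hi => by
    rw [if_neg (Finset.ne_of_mem_erase hi)]), Finset.prod_const]
  simp [Finset.card_erase_of_mem, card_univ]

lemma card_eval_mem2 {n : ℕ} {a b : Fin n} (hab : a ≠ b) (A B : Finset (Fin n)) :
    (univ.filter fun h : Fin n → Fin n => h a ∈ A ∧ h b ∈ B).card
      = A.card * B.card * n ^ (n - 2) := by
  have he : (univ.filter fun h : Fin n → Fin n => h a ∈ A ∧ h b ∈ B)
      = Fintype.piFinset (fun i => if i = a then A else if i = b then B else univ) := by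
    ext h
    simp only [mem_filter, mem_univ, true_and, Fintype.mem_piFinset]
    constructor
    · intro hh i
      by_cases hi : i = a
      · simp [hi, hab, hh.1]
      · by_cases hib : i = b <;> simp [hi, hib, hh.2, hab.symm]
    · intro hh
      refine ⟨?_, ?_⟩
      · have := hh a; simpa using this
      · have := hh b; simpa [hab.symm] using this
  rw [he, Fintype.card_piFinset]
  rw [← Finset.mul_prod_erase univ _ (mem_univ a)]
  have hb : b ∈ univ.erase a := by simp [hab.symm]
  rw [← Finset.mul_prod_erase _ _ hb]
  simp only [if_pos rfl, if_neg (Ne.symm hab)]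
  rw [Finset.prod_congr rfl (fun i hi => by
    have h1 : i ≠ b := Finset.ne_of_mem_erase hi
    have h2 : i ≠ a := Finset.ne_of_mem_erase (Finset.mem_of_mem_erase hi)
    rw [if_neg h2, if_neg h1]), Finset.prod_const]
  have : ((univ.erase a).erase b).card = n - 2 := by
    rw [Finset.card_erase_of_mem hb, Finset.card_erase_of_mem (mem_univ a)]
    simp [card_univ]
    omega
  rw [this, card_univ, Fintype.card_fin]
  simp [Ne.symm hab]
  ring

lemma card_dvd_val {n k : ℕ} :
    (univ.filter fun v : Fin n => 2 ^ k ∣ (v : ℕ) + 1).card = n / 2 ^ k := by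
  rw [← Nat.Ioc_filter_dvd_card_eq_div n (2 ^ k)]
  refine Finset.card_bij (fun v _ => (v : ℕ) + 1) ?_ ?_ ?_
  · intro v hv
    simp only [mem_filter, mem_univ, true_and] at hv ⊢
    refine ⟨Finset.mem_Ioc.mpr ⟨Nat.succ_pos _, ?_⟩, hv⟩
    exact Nat.succ_le_of_lt v.isLt
  · intro v _ w _ h
    exact Fin.ext (Nat.succ_injective h)
  · intro m hm
    simp only [mem_filter, Finset.mem_Ioc] at hm
    refine ⟨⟨m - 1, by omega⟩, ?_, by simp; omega⟩
    simp only [mem_filter, mem_univ, true_and]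
    have : m - 1 + 1 = m := by omega
    simpa [this] using hm.2

lemma padic_eq_iff {m j : ℕ} (hm : m ≠ 0) :
    padicValNat 2 m = j ↔ (2 ^ j ∣ m ∧ ¬ 2 ^ (j + 1) ∣ m) := by
  haveI : Fact (Nat.Prime 2) := ⟨Nat.prime_two⟩
  rw [padicValNat_dvd_iff_le hm, padicValNat_dvd_iff_le hm]
  omega

lemma card_v_eq {n : ℕ} (j : ℕ) :
    (univ.filter fun v : Fin n => padicValNat 2 ((v : ℕ) + 1) = j).card
      = n / 2 ^ j - n / 2 ^ (j + 1) := by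
  have hset : (univ.filter fun v : Fin n => padicValNat 2 ((v : ℕ) + 1) = j)
      = (univ.filter fun v : Fin n => 2 ^ j ∣ (v : ℕ) + 1)
        \ (univ.filter fun v : Fin n => 2 ^ (j + 1) ∣ (v : ℕ) + 1) := by
    ext v
    simp only [mem_filter, mem_univ, true_and, Finset.mem_sdiff, mem_filter]
    rw [padic_eq_iff (Nat.succ_ne_zero _)]
  rw [hset, Finset.card_sdiff_of_subset (by
    intro v hv
    simp only [mem_filter, mem_univ, true_and] at hv ⊢
    exact dvd_trans (pow_dvd_pow 2 (Nat.le_succ j)) hv), card_dvd_val, card_dvd_val]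

lemma card_v_ge {n k : ℕ} :
    (univ.filter fun v : Fin n => k ≤ padicValNat 2 ((v : ℕ) + 1)).card ≤ n / 2 ^ k := by
  rw [← card_dvd_val (n := n) (k := k)]
  apply Finset.card_le_card
  intro v hv
  simp only [mem_filter, mem_univ, true_and] at hv ⊢
  haveI : Fact (Nat.Prime 2) := ⟨Nat.prime_two⟩
  exact (padicValNat_dvd_iff_le (Nat.succ_ne_zero _)).mpr hv
lemma sum_card_filter {n : ℕ} (S A : Finset (Fin n)) :
    ∑ h : Fin n → Fin n, (S.filter fun a => h a ∈ A).card
      = S.card * (A.card * n ^ (n - 1)) := by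
  have h1 : ∀ h : Fin n → Fin n, (S.filter fun a => h a ∈ A).card
      = ∑ a ∈ S, if h a ∈ A then 1 else 0 := fun h => Finset.card_filter _ _
  simp_rw [h1]
  rw [Finset.sum_comm]
  rw [Finset.sum_congr rfl (fun a _ => ?_), Finset.sum_const, smul_eq_mul]
  rw [Finset.sum_boole]
  push_cast
  rw [card_eval_mem a A]

lemma sum_card_filter_sq {n : ℕ} (S A : Finset (Fin n)) :
    ∑ h : Fin n → Fin n, ((S.filter fun a => h a ∈ A).card) ^ 2
      = S.card * ((A.card * n ^ (n - 1)) + (S.card - 1) * (A.card ^ 2 * n ^ (n - 2))) := by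
  have h1 : ∀ h : Fin n → Fin n, ((S.filter fun a => h a ∈ A).card) ^ 2
      = ∑ a ∈ S, ∑ b ∈ S, (if h a ∈ A then 1 else 0) * (if h b ∈ A then 1 else 0) := by
    intro h
    rw [Finset.card_filter, sq, Finset.sum_mul_sum]
  simp_rw [h1]
  rw [Finset.sum_comm]
  have h2 : ∀ a ∈ S, ∑ h : Fin n → Fin n, ∑ b ∈ S,
      (if h a ∈ A then 1 else 0) * (if h b ∈ A then 1 else 0)
      = (A.card * n ^ (n - 1)) + (S.card - 1) * (A.card ^ 2 * n ^ (n - 2)) := by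
    intro a ha
    rw [Finset.sum_comm]
    rw [← Finset.add_sum_erase _ _ ha]
    have hdiag : ∑ h : Fin n → Fin n, (if h a ∈ A then 1 else 0) * (if h a ∈ A then 1 else 0)
        = A.card * n ^ (n - 1) := by
      have : ∀ h : Fin n → Fin n, (if h a ∈ A then 1 else 0) * (if h a ∈ A then 1 else 0)
          = if h a ∈ A then 1 else 0 := by intro h; by_cases hh : h a ∈ A <;> simp [hh]
      simp_rw [this]
      rw [Finset.sum_boole]; push_cast; rw [card_eval_mem a A]
    have hoff : ∀ b ∈ S.erase a, ∑ h : Fin n → Fin n,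
        (if h a ∈ A then 1 else 0) * (if h b ∈ A then 1 else 0)
        = A.card ^ 2 * n ^ (n - 2) := by
      intro b hb
      have hba : a ≠ b := (Finset.ne_of_mem_erase hb).symm
      have : ∀ h : Fin n → Fin n, (if h a ∈ A then 1 else 0) * (if h b ∈ A then 1 else 0)
          = if (h a ∈ A ∧ h b ∈ A) then 1 else 0 := by
        intro h; by_cases h1 : h a ∈ A <;> by_cases h2 : h b ∈ A <;> simp [h1, h2]
      simp_rw [this]
      rw [Finset.sum_boole]; push_cast
      rw [card_eval_mem2 hba A A, sq]
    rw [hdiag, Finset.sum_congr rfl hoff, Finset.sum_const, smul_eq_mul,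
      Finset.card_erase_of_mem ha]
  rw [Finset.sum_congr rfl h2, Finset.sum_const, smul_eq_mul]

lemma count_low {n : ℕ} (S A : Finset (Fin n)) (hn2 : 2 ≤ n) (hS : 1 ≤ S.card)
    (t : ℝ) (ht : 0 ≤ t)
    (hmt : 3 * t ≤ (S.card : ℝ) * A.card / n) :
    ((univ.filter fun h : Fin n → Fin n =>
        ((S.filter fun a => h a ∈ A).card : ℝ) ≤ 2 * t).card : ℝ) * t ^ 2
      ≤ (S.card : ℝ) * A.card * (n : ℝ) ^ (n - 1) := by
  have hn0 : (0 : ℝ) < n := by positivity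
  set m : ℝ := (S.card : ℝ) * A.card / n with hmdef
  have hm : m * n = (S.card : ℝ) * A.card := by
    rw [hmdef, div_mul_cancel₀ _ hn0.ne']
  set X : (Fin n → Fin n) → ℕ := fun h => (S.filter fun a => h a ∈ A).card with hX
  have s1 : ∑ h : Fin n → Fin n, ((X h : ℝ)) = (S.card : ℝ) * ((A.card : ℝ) * (n : ℝ) ^ (n - 1)) := by
    rw [← Nat.cast_sum]
    rw [sum_card_filter S A]
    push_cast
    ring
  have s2 : ∑ h : Fin n → Fin n, ((X h : ℝ)) ^ 2
      = (S.card : ℝ) * (((A.card : ℝ) * (n : ℝ) ^ (n - 1))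
          + ((S.card : ℝ) - 1) * ((A.card : ℝ) ^ 2 * (n : ℝ) ^ (n - 2))) := by
    have := sum_card_filter_sq S A
    have hcast := congrArg (Nat.cast : ℕ → ℝ) this
    rw [Nat.cast_sum] at hcast
    push_cast [Nat.cast_sub hS] at hcast
    push_cast
    linarith [hcast]
  have eq1 : (n : ℝ) ^ n = (n : ℝ) ^ (n - 2) * (n : ℝ) ^ 2 := by
    rw [← pow_add]; congr 1; omega
  have eq2 : (n : ℝ) ^ (n - 1) = (n : ℝ) ^ (n - 2) * (n : ℝ) := by
    rw [← pow_succ]; congr 1; omega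
  have key : ∑ h : Fin n → Fin n, ((X h : ℝ) - m) ^ 2
      ≤ (S.card : ℝ) * A.card * (n : ℝ) ^ (n - 1) := by
    have e : ∑ h : Fin n → Fin n, ((X h : ℝ) - m) ^ 2
        = (∑ h : Fin n → Fin n, ((X h : ℝ)) ^ 2)
          - 2 * m * (∑ h : Fin n → Fin n, ((X h : ℝ)))
          + ((n : ℝ)) ^ n * m ^ 2 := by
      have : ∀ h : Fin n → Fin n, ((X h : ℝ) - m) ^ 2
          = ((X h : ℝ)) ^ 2 - 2 * m * (X h : ℝ) + m ^ 2 := by intro h; ring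
      rw [Finset.sum_congr rfl (fun h _ => this h), Finset.sum_add_distrib,
        Finset.sum_sub_distrib, Finset.sum_const, ← Finset.mul_sum, card_univ]
      have : Fintype.card (Fin n → Fin n) = n ^ n := by
        simp [Fintype.card_fun]
      rw [this]
      push_cast
      ring
    have hD0 : (0 : ℝ) ≤ (S.card : ℝ) := by positivity
    have hp0 : (0 : ℝ) ≤ (n : ℝ) ^ (n - 2) := by positivity
    have hid : (S.card : ℝ) * (((A.card : ℝ) * (n : ℝ) ^ (n - 1))
          + ((S.card : ℝ) - 1) * ((A.card : ℝ) ^ 2 * (n : ℝ) ^ (n - 2)))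
        - 2 * m * ((S.card : ℝ) * ((A.card : ℝ) * (n : ℝ) ^ (n - 1)))
        + ((n : ℝ)) ^ n * m ^ 2
        = (S.card : ℝ) * (A.card : ℝ) * (n : ℝ) ^ (n - 1)
          - (S.card : ℝ) * ((A.card : ℝ) ^ 2) * (n : ℝ) ^ (n - 2) := by
      rw [eq1, eq2, hmdef]
      field_simp
      ring
    rw [e, s1, s2, hid]
    nlinarith [mul_nonneg (mul_nonneg hD0 (sq_nonneg ((A.card : ℝ)))) hp0]
  set Bad := univ.filter fun h : Fin n → Fin n => ((X h : ℝ)) ≤ 2 * t with hBad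
  have step : (Bad.card : ℝ) * t ^ 2 ≤ ∑ h ∈ Bad, ((X h : ℝ) - m) ^ 2 := by
    rw [← nsmul_eq_mul, ← Finset.sum_const]
    apply Finset.sum_le_sum
    intro h hh
    rw [hBad, mem_filter] at hh
    have h1 : (X h : ℝ) ≤ 2 * t := hh.2
    nlinarith [hmt, ht, h1]
  calc (Bad.card : ℝ) * t ^ 2 ≤ ∑ h ∈ Bad, ((X h : ℝ) - m) ^ 2 := step
    _ ≤ ∑ h : Fin n → Fin n, ((X h : ℝ) - m) ^ 2 := by
        apply Finset.sum_le_sum_of_subset_of_nonneg (Finset.filter_subset _ _)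
        intro h _ _; positivity
    _ ≤ _ := key

set_option maxHeartbeats 1000000 in
theorem stmt12 (K : ℕ) (n : ℕ) (hn : n = 2 ^ K) (τ : ℝ) (hτ : 600 ≤ τ)
    (x : Fin n → ℕ) :
    (2 / 3 : ℝ) ≤
      ((Finset.univ.filter (fun h : Fin n → Fin n =>
          ∀ fhat : ℕ → ℝ,
            (∀ k ≤ K, |fhat k -
                ((∑ a ∈ Finset.univ.filter
                    (fun a : Fin n => padicValNat 2 ((h a : ℕ) + 1) = k), x a : ℕ) : ℝ)| ≤ τ) →
            ∀ L : ℕ,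
              ((L ≤ K ∧ τ < fhat L ∧ ∀ k ≤ K, τ < fhat k → k ≤ L) ∨
                (L = 0 ∧ ∀ k ≤ K, fhat k ≤ τ)) →
              (((Finset.univ.filter (fun a : Fin n => 0 < x a)).card : ℝ) / (12 * τ) ≤
                  2 ^ L ∧
                (2 : ℝ) ^ L ≤
                  4 * ((Finset.univ.filter (fun a : Fin n => 0 < x a)).card : ℝ) + 1))).card : ℝ) /
        (Fintype.card (Fin n → Fin n) : ℝ) := by
  have hτ0 : (0 : ℝ) < τ := by linarith
  have hn1 : 1 ≤ n := by rw [hn]; exact Nat.one_le_two_pow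
  set S : Finset (Fin n) := Finset.univ.filter (fun a : Fin n => 0 < x a) with hSdef
  set D : ℕ := S.card with hDdef
  -- k0 : least k with 4D+1 < 2^k
  have hk0ex : ∃ k : ℕ, 4 * D + 1 < 2 ^ k := ⟨4 * D + 1, Nat.lt_two_pow_self⟩
  set k0 : ℕ := Nat.find hk0ex with hk0def
  have hk0 : 4 * D + 1 < 2 ^ k0 := Nat.find_spec hk0ex
  -- jstar : least j with D ≤ 12τ·2^j
  have hDn : D ≤ n := by rw [hDdef]; exact le_trans (Finset.card_le_univ S) (by simp)
  have hjex : ∃ j : ℕ, (D : ℝ) ≤ 12 * τ * 2 ^ j := by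
    refine ⟨K, ?_⟩
    have h1 : (D : ℝ) ≤ (n : ℝ) := by exact_mod_cast hDn
    have h2 : (n : ℝ) = 2 ^ K := by rw [hn]; push_cast; ring
    nlinarith [pow_pos (by norm_num : (0:ℝ) < 2) K]
  set jstar : ℕ := Nat.find hjex with hjdef
  have hj1 : (D : ℝ) ≤ 12 * τ * 2 ^ jstar := Nat.find_spec hjex
  have hjK : jstar ≤ K := by
    apply Nat.find_min' hjex
    have h1 : (D : ℝ) ≤ (n : ℝ) := by exact_mod_cast hDn
    have h2 : (n : ℝ) = 2 ^ K := by rw [hn]; push_cast; ring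
    nlinarith [pow_pos (by norm_num : (0:ℝ) < 2) K]
  set A : Finset (Fin n) := Finset.univ.filter
      (fun w : Fin n => padicValNat 2 ((w : ℕ) + 1) = jstar) with hAdef
  set Ageq : Finset (Fin n) := Finset.univ.filter
      (fun w : Fin n => k0 ≤ padicValNat 2 ((w : ℕ) + 1)) with hAgeqdef
  set Bad1 : Finset (Fin n → Fin n) := Finset.univ.filter
      (fun h : Fin n → Fin n => ∃ a ∈ S, 4 * D + 1 < 2 ^ (padicValNat 2 ((h a : ℕ) + 1)))
      with hB1def
  set Bad2 : Finset (Fin n → Fin n) := Finset.univ.filter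
      (fun h : Fin n → Fin n => ((S.filter fun a => h a ∈ A).card : ℝ) ≤ 2 * τ) with hB2def
  have hk0min : ∀ v : ℕ, 4 * D + 1 < 2 ^ v → k0 ≤ v :=
    fun v hv => Nat.find_min' hk0ex hv
  have hjmin0 : ∀ m : ℕ, m < jstar → ¬((D : ℝ) ≤ 12 * τ * 2 ^ m) :=
    fun m hm => Nat.find_min hjex hm
  clear_value Bad2 Bad1 Ageq A jstar k0 D S
  have hNpow : ((Fintype.card (Fin n → Fin n) : ℕ) : ℝ) = (n : ℝ) ^ n := by
    rw [Fintype.card_fun]; push_cast; simp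
  have hNpos : (0 : ℝ) < (n : ℝ) ^ n := by positivity
  have epow : (n : ℝ) ^ (n - 1) * (n : ℝ) = (n : ℝ) ^ n := by
    rw [← pow_succ]; congr 1; omega
  -- the good implication
  have hgood : ∀ h : Fin n → Fin n,
      (∀ a ∈ S, 2 ^ (padicValNat 2 ((h a : ℕ) + 1)) ≤ 4 * D + 1) →
      (12 * τ < (D : ℝ) → 2 * τ < ((S.filter fun a => h a ∈ A).card : ℝ)) →
      (∀ fhat : ℕ → ℝ,
          (∀ k ≤ K, |fhat k -
              ((∑ a ∈ Finset.univ.filter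
                  (fun a : Fin n => padicValNat 2 ((h a : ℕ) + 1) = k), x a : ℕ) : ℝ)| ≤ τ) →
          ∀ L : ℕ,
            ((L ≤ K ∧ τ < fhat L ∧ ∀ k ≤ K, τ < fhat k → k ≤ L) ∨
              (L = 0 ∧ ∀ k ≤ K, fhat k ≤ τ)) →
            ((D : ℝ) / (12 * τ) ≤ 2 ^ L ∧
              (2 : ℝ) ^ L ≤ 4 * (D : ℝ) + 1)) := by
    intro h hb1 hb2 fhat hfhat L hL
    constructor
    · -- lower bound
      by_cases hD12 : (D : ℝ) ≤ 12 * τ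
      · have h2L : (1 : ℝ) ≤ 2 ^ L := one_le_pow₀ (by norm_num)
        have hd1 : (D : ℝ) / (12 * τ) ≤ 1 := by
          rw [div_le_one (by positivity)]; linarith
        linarith
      · push_neg at hD12
        have hX := hb2 hD12
        have hXle : (S.filter fun a => h a ∈ A).card ≤
            ∑ a ∈ Finset.univ.filter
              (fun a : Fin n => padicValNat 2 ((h a : ℕ) + 1) = jstar), x a := by
          have hset : (S.filter fun a => h a ∈ A)
              = S.filter (fun a => padicValNat 2 ((h a : ℕ) + 1) = jstar) := by
            ext a
            simp [hAdef]
          rw [hset]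
          calc (S.filter (fun a => padicValNat 2 ((h a : ℕ) + 1) = jstar)).card
              ≤ ∑ a ∈ S.filter (fun a => padicValNat 2 ((h a : ℕ) + 1) = jstar), x a := by
                rw [Finset.card_eq_sum_ones]
                refine Finset.sum_le_sum ?_
                intro a ha
                have haS : a ∈ S := Finset.mem_of_mem_filter a ha
                rw [hSdef, Finset.mem_filter] at haS
                omega
            _ ≤ _ := by
                apply Finset.sum_le_sum_of_subset
                exact Finset.filter_subset_filter _ (Finset.subset_univ S)
        have hfj : 2 * τ < ((∑ a ∈ Finset.univ.filter
            (fun a : Fin n => padicValNat 2 ((h a : ℕ) + 1) = jstar), x a : ℕ) : ℝ) :=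
          lt_of_lt_of_le hX (by exact_mod_cast hXle)
        have hfhatj := hfhat jstar hjK
        have habs := abs_le.mp hfhatj
        have hfhatτ : τ < fhat jstar := by linarith [habs.1]
        rcases hL with ⟨hLK, hfl, hmax⟩ | ⟨hL0, hall⟩
        · have hjL : jstar ≤ L := hmax jstar hjK hfhatτ
          have hpow2 : (2 : ℝ) ^ jstar ≤ 2 ^ L :=
            pow_le_pow_right₀ (by norm_num) hjL
          have hdj : (D : ℝ) / (12 * τ) ≤ 2 ^ jstar := by
            rw [div_le_iff₀ (by positivity)]
            nlinarith
          linarith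
        · exact absurd (hall jstar hjK) (not_le.mpr hfhatτ)
    · -- upper bound
      rcases hL with ⟨hLK, hfl, _⟩ | ⟨hL0, _⟩
      · have hfhatL := hfhat L hLK
        have habs := abs_le.mp hfhatL
        have hfL : (Finset.univ.filter
            (fun a : Fin n => padicValNat 2 ((h a : ℕ) + 1) = L)).sum x ≠ 0 := by
          intro h0
          rw [h0] at habs
          push_cast at habs
          linarith [habs.1]
        obtain ⟨a, ha, hxa⟩ := Finset.exists_ne_zero_of_sum_ne_zero hfL
        have haS : a ∈ S := by
          rw [hSdef, Finset.mem_filter]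
          exact ⟨Finset.mem_univ a, Nat.pos_of_ne_zero hxa⟩
        have hpa : padicValNat 2 ((h a : ℕ) + 1) = L := (Finset.mem_filter.mp ha).2
        have h2l := hb1 a haS
        rw [hpa] at h2l
        calc (2 : ℝ) ^ L = ((2 ^ L : ℕ) : ℝ) := by push_cast; ring
          _ ≤ ((4 * D + 1 : ℕ) : ℝ) := by exact_mod_cast h2l
          _ = 4 * (D : ℝ) + 1 := by push_cast; ring
      · rw [hL0]
        have hD0 : (0 : ℝ) ≤ (D : ℝ) := Nat.cast_nonneg D
        simp only [pow_zero]
        linarith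
  -- bound on Bad1
  have hBad1 : (Bad1.card : ℝ) ≤ 1 / 4 * (n : ℝ) ^ n := by
    have hsub : Bad1 ⊆ S.biUnion (fun a => Finset.univ.filter
        (fun h : Fin n → Fin n => h a ∈ Ageq)) := by
      intro h hh
      rw [hB1def, Finset.mem_filter] at hh
      obtain ⟨a, haS, hav⟩ := hh.2
      apply Finset.mem_biUnion.mpr
      refine ⟨a, haS, ?_⟩
      rw [Finset.mem_filter]
      refine ⟨Finset.mem_univ h, ?_⟩
      rw [hAgeqdef, Finset.mem_filter]
      exact ⟨Finset.mem_univ _, hk0min _ hav⟩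
    have hcard1 : Bad1.card ≤ D * (Ageq.card * n ^ (n - 1)) := by
      calc Bad1.card ≤ (S.biUnion fun a => Finset.univ.filter
            (fun h : Fin n → Fin n => h a ∈ Ageq)).card := Finset.card_le_card hsub
        _ ≤ ∑ a ∈ S, (Finset.univ.filter
            (fun h : Fin n → Fin n => h a ∈ Ageq)).card := Finset.card_biUnion_le
        _ = ∑ a ∈ S, Ageq.card * n ^ (n - 1) := by
            exact Finset.sum_congr rfl (fun a _ => card_eval_mem a Ageq)
        _ = D * (Ageq.card * n ^ (n - 1)) := by
            rw [Finset.sum_const, smul_eq_mul, hDdef]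
    have hAgeq : Ageq.card ≤ n / (4 * D + 2) := by
      calc Ageq.card ≤ n / 2 ^ k0 := by rw [hAgeqdef]; exact card_v_ge
        _ ≤ n / (4 * D + 2) := Nat.div_le_div_left (by omega) (by omega)
    have hq : ((n / (4 * D + 2) : ℕ) : ℝ) ≤ (n : ℝ) / (4 * D + 2) := by
      have := Nat.cast_div_le (m := n) (n := 4 * D + 2) (α := ℝ)
      push_cast at this ⊢
      exact this
    have hc1 : (Bad1.card : ℝ) ≤ (D : ℝ) * (((n / (4 * D + 2) : ℕ) : ℝ) * (n : ℝ) ^ (n - 1)) := by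
      calc (Bad1.card : ℝ) ≤ ((D * (Ageq.card * n ^ (n - 1)) : ℕ) : ℝ) := by exact_mod_cast hcard1
        _ ≤ _ := by
            push_cast
            have hA' : ((Ageq.card : ℕ) : ℝ) ≤ ((n / (4 * D + 2) : ℕ) : ℝ) := by
              exact_mod_cast hAgeq
            exact mul_le_mul_of_nonneg_left
              (mul_le_mul_of_nonneg_right hA' (by positivity)) (by positivity)
    have h14 : (D : ℝ) * ((n : ℝ) / (4 * D + 2)) ≤ (n : ℝ) / 4 := by
      rw [← mul_div_assoc, div_le_div_iff₀ (by positivity) (by norm_num)]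
      have hn0 : (0 : ℝ) ≤ (n : ℝ) := by positivity
      nlinarith
    have hp : (0 : ℝ) ≤ (n : ℝ) ^ (n - 1) := by positivity
    have hd : (0 : ℝ) ≤ (D : ℝ) := by positivity
    have step1 : (D : ℝ) * (((n / (4 * D + 2) : ℕ) : ℝ)) ≤ (D : ℝ) * ((n : ℝ) / (4 * (D : ℝ) + 2)) :=
      mul_le_mul_of_nonneg_left hq hd
    calc (Bad1.card : ℝ) ≤ (D : ℝ) * (((n / (4 * D + 2) : ℕ) : ℝ) * (n : ℝ) ^ (n - 1)) := hc1
      _ = ((D : ℝ) * ((n / (4 * D + 2) : ℕ) : ℝ)) * (n : ℝ) ^ (n - 1) := by ring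
      _ ≤ ((n : ℝ) / 4) * (n : ℝ) ^ (n - 1) :=
          mul_le_mul_of_nonneg_right (step1.trans h14) hp
      _ = 1 / 4 * (n : ℝ) ^ n := by rw [← epow]; ring
  -- bound on Bad2 in the relevant case
  have hBad2 : 12 * τ < (D : ℝ) → (Bad2.card : ℝ) ≤ 1 / 50 * (n : ℝ) ^ n := by
    intro hD12
    have hD1 : 1 ≤ D := by
      rcases Nat.eq_zero_or_pos D with h0 | h1
      · rw [h0] at hD12
        norm_num at hD12
        linarith
      · exact h1
    have hn2 : 2 ≤ n := by
      by_contra hc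
      push_neg at hc
      have hD1' : D ≤ 1 := by omega
      have : (D : ℝ) ≤ 1 := by exact_mod_cast hD1'
      linarith
    -- jstar ≥ 1 and minimality
    have hj0 : jstar ≠ 0 := by
      intro h0
      rw [h0] at hj1
      simp at hj1
      linarith
    have hjmin : 12 * τ * 2 ^ (jstar - 1) < (D : ℝ) := by
      have := hjmin0 (jstar - 1) (by omega)
      push_neg at this
      exact this
    have hjhalf : 6 * τ * 2 ^ jstar < (D : ℝ) := by
      have : (2 : ℝ) ^ jstar = 2 ^ (jstar - 1) * 2 := by
        rw [← pow_succ]; congr 1; omega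
      rw [this]; linarith [hjmin]
    -- A.card lower bound : 2 * A.card * 2^jstar ≥ n
    have hAcard : A.card = n / 2 ^ jstar - n / 2 ^ (jstar + 1) := by
      rw [hAdef]; exact card_v_eq jstar
    have hclow : n ≤ 2 * A.card * 2 ^ jstar := by
      rw [hAcard, hn]
      rcases Nat.lt_or_ge jstar K with hlt | hge
      · have e1 : 2 ^ K / 2 ^ jstar = 2 ^ (K - jstar) := Nat.pow_div (by omega) (by norm_num)
        have e2 : 2 ^ K / 2 ^ (jstar + 1) = 2 ^ (K - (jstar + 1)) := Nat.pow_div (by omega) (by norm_num)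
        rw [e1, e2]
        have e3 : 2 ^ (K - jstar) = 2 * 2 ^ (K - (jstar + 1)) := by
          rw [← pow_succ']; congr 1; omega
        rw [e3]
        have e4 : 2 * 2 ^ (K - (jstar + 1)) - 2 ^ (K - (jstar + 1)) = 2 ^ (K - (jstar + 1)) := by omega
        rw [e4]
        rw [← pow_succ', ← pow_add]
        apply Nat.pow_le_pow_right (by norm_num)
        omega
      · have hjeq : jstar = K := le_antisymm hjK hge
        rw [hjeq]
        have e1 : 2 ^ K / 2 ^ K = 1 := Nat.div_self (by positivity)
        have e2 : 2 ^ K / 2 ^ (K + 1) = 0 := Nat.div_eq_of_lt (by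
          apply Nat.pow_lt_pow_right (by norm_num); omega)
        rw [e1, e2]
        omega
    -- apply count_low with t = τ
    have hmt : 3 * τ ≤ (S.card : ℝ) * A.card / n := by
      rw [le_div_iff₀ (by positivity)]
      have hc0 : (0 : ℝ) ≤ (A.card : ℝ) := by positivity
      have hcl : (n : ℝ) ≤ 2 * (A.card : ℝ) * 2 ^ jstar := by
        have := hclow
        push_cast
        exact_mod_cast this
      rw [← hDdef]
      nlinarith [pow_pos (by norm_num : (0:ℝ) < 2) jstar]
    have hcl := count_low S A hn2 (by rw [← hDdef]; omega) τ (le_of_lt hτ0) hmt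
    rw [← hB2def] at hcl
    -- A.card ≤ n / 2^jstar ≤ real bound
    have hAup : (A.card : ℝ) ≤ (n : ℝ) / 2 ^ jstar := by
      have h1 : A.card ≤ n / 2 ^ jstar := by rw [hAcard]; exact Nat.sub_le _ _
      have h2 : ((n / 2 ^ jstar : ℕ) : ℝ) ≤ (n : ℝ) / (2 ^ jstar : ℕ) := Nat.cast_div_le
      calc (A.card : ℝ) ≤ ((n / 2 ^ jstar : ℕ) : ℝ) := by exact_mod_cast h1
        _ ≤ (n : ℝ) / (2 ^ jstar : ℕ) := h2
        _ = (n : ℝ) / 2 ^ jstar := by push_cast; ring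
    have hDc : (S.card : ℝ) * A.card ≤ 12 * τ * (n : ℝ) := by
      rw [← hDdef]
      have h2j : (0 : ℝ) < (2 : ℝ) ^ jstar := by positivity
      have := mul_le_mul hj1 hAup (by positivity) (by positivity)
      calc (D : ℝ) * A.card ≤ (12 * τ * 2 ^ jstar) * ((n : ℝ) / 2 ^ jstar) := this
        _ = 12 * τ * (n : ℝ) := by field_simp
    have hkey : (Bad2.card : ℝ) * τ ^ 2 ≤ 12 * τ * ((n : ℝ) ^ n) := by
      calc (Bad2.card : ℝ) * τ ^ 2 ≤ (S.card : ℝ) * A.card * (n : ℝ) ^ (n - 1) := hcl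
        _ ≤ 12 * τ * (n : ℝ) * (n : ℝ) ^ (n - 1) := by
            have hp : (0 : ℝ) ≤ (n : ℝ) ^ (n - 1) := by positivity
            nlinarith
        _ = 12 * τ * ((n : ℝ) ^ n) := by rw [← epow]; ring
    -- conclude
    have hfin : (Bad2.card : ℝ) * τ ^ 2 ≤ (1 / 50 * (n : ℝ) ^ n) * τ ^ 2 := by
      calc (Bad2.card : ℝ) * τ ^ 2 ≤ 12 * τ * ((n : ℝ) ^ n) := hkey
        _ ≤ (1 / 50 * (n : ℝ) ^ n) * τ ^ 2 := by
            have hpr : 0 ≤ (τ - 600) * τ * ((n : ℝ) ^ n) :=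
              mul_nonneg (mul_nonneg (by linarith) hτ0.le) hNpos.le
            nlinarith [hpr]
    exact le_of_mul_le_mul_right hfin (by positivity)
  -- assemble
  rw [le_div_iff₀ (by rw [hNpow]; positivity)]
  set Bad2' : Finset (Fin n → Fin n) := if 12 * τ < (D : ℝ) then Bad2 else ∅ with hB2'def
  have hB2'bound : (Bad2'.card : ℝ) ≤ 1 / 50 * (n : ℝ) ^ n := by
    rw [hB2'def]
    split_ifs with hc
    · exact hBad2 hc
    · simp only [Finset.card_empty, Nat.cast_zero]
      positivity
  have hsubG : Finset.univ \ (Bad1 ∪ Bad2') ⊆ Finset.univ.filter (fun h : Fin n → Fin n =>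
      ∀ fhat : ℕ → ℝ,
        (∀ k ≤ K, |fhat k -
            ((∑ a ∈ Finset.univ.filter
                (fun a : Fin n => padicValNat 2 ((h a : ℕ) + 1) = k), x a : ℕ) : ℝ)| ≤ τ) →
        ∀ L : ℕ,
          ((L ≤ K ∧ τ < fhat L ∧ ∀ k ≤ K, τ < fhat k → k ≤ L) ∨
            (L = 0 ∧ ∀ k ≤ K, fhat k ≤ τ)) →
          (((D : ℕ) : ℝ) / (12 * τ) ≤ 2 ^ L ∧
            (2 : ℝ) ^ L ≤ 4 * ((D : ℕ) : ℝ) + 1)) := by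
    intro h hh
    rw [Finset.mem_sdiff, Finset.mem_union] at hh
    push_neg at hh
    obtain ⟨-, hnb1, hnb2'⟩ := hh
    have hb1 : ∀ a ∈ S, 2 ^ (padicValNat 2 ((h a : ℕ) + 1)) ≤ 4 * D + 1 := by
      intro a ha
      by_contra hcon
      push_neg at hcon
      exact hnb1 (by rw [hB1def, Finset.mem_filter]; exact ⟨Finset.mem_univ h, a, ha, hcon⟩)
    have hb2 : 12 * τ < (D : ℝ) → 2 * τ < ((S.filter fun a => h a ∈ A).card : ℝ) := by
      intro h12
      rw [hB2'def, if_pos h12] at hnb2'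
      by_contra hcon
      push_neg at hcon
      exact hnb2' (by rw [hB2def, Finset.mem_filter]; exact ⟨Finset.mem_univ h, hcon⟩)
    rw [Finset.mem_filter]
    exact ⟨Finset.mem_univ h, hgood h hb1 hb2⟩
  have hcard : ((Finset.univ \ (Bad1 ∪ Bad2')).card : ℝ)
      ≥ (n : ℝ) ^ n - ((Bad1.card : ℝ) + (Bad2'.card : ℝ)) := by
    rw [Finset.card_sdiff_of_subset (Finset.subset_univ _)]
    have h1 : (Bad1 ∪ Bad2').card ≤ Finset.univ.card :=
      Finset.card_le_univ _
    rw [Nat.cast_sub h1]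
    have h2 : ((Bad1 ∪ Bad2').card : ℝ) ≤ (Bad1.card : ℝ) + (Bad2'.card : ℝ) := by
      exact_mod_cast Finset.card_union_le Bad1 Bad2'
    have h3 : ((Finset.univ : Finset (Fin n → Fin n)).card : ℝ) = (n : ℝ) ^ n := by
      rw [Finset.card_univ]; exact hNpow
    rw [h3]
    linarith
  have hfinal := Finset.card_le_card hsubG
  have hfinal' : ((Finset.univ \ (Bad1 ∪ Bad2')).card : ℝ) ≤ _ := Nat.cast_le.mpr hfinal
  rw [hNpow]
  calc (2 / 3 : ℝ) * (n : ℝ) ^ n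
      ≤ (n : ℝ) ^ n - (1 / 4 * (n : ℝ) ^ n + 1 / 50 * (n : ℝ) ^ n) := by nlinarith
    _ ≤ ((Finset.univ \ (Bad1 ∪ Bad2')).card : ℝ) := by linarith [hcard, hBad1, hB2'bound]
    _ ≤ _ := hfinal'
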